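/- With X = {0} ⊕ X_0 ⊕ X_1 ⊕ ⋯ as above, if all finite products ∏_{i<n} X_{p(i)} (p : n → ω) are CLP-compact, then Xⁿ is CLP-compact for every n ∈ ω. -/

import Mathlib

/-- CLP-compact: every clopen cover has a finite subcover. -/
def CLPCompact (X : Type*) [TopologicalSpace X] : Prop :=
  ∀ C : Set (Set X), (∀ U ∈ C, IsClopen U) → ⋃₀ C = Set.univ →
    ∃ D ⊆ C, D.Finite ∧ ⋃₀ D = Set.univ

/-- The one-point convergent sum X = {0} ⊕ X₀ ⊕ X₁ ⊕ ⋯ ; none plays the role of 0. -/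
def SumSpace (X : ℕ → Type*) : Type _ := Option (Σ i, X i)

/-- The coarsest topology making every open subset of every Xᵢ open, and every tail
{0} ∪ ⋃_{j≥i} Xⱼ open. -/
instance (X : ℕ → Type*) [∀ i, TopologicalSpace (X i)] : TopologicalSpace (SumSpace X) :=
  TopologicalSpace.generateFrom
    ({S | ∃ (i : ℕ) (U : Set (X i)), IsOpen U ∧
        S = (fun x : X i => (some ⟨i, x⟩ : SumSpace X)) '' U} ∪
     {S | ∃ i : ℕ, S = insert (none : SumSpace X)
        {y : SumSpace X | ∃ (j : ℕ) (x : X j), i ≤ j ∧ y = some ⟨j, x⟩}})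

namespace SumSpaceCLP

open Set TopologicalSpace

/-! ### Generic CLP-compactness lemmas -/

/-- CLP-compactness is preserved by continuous surjections. -/
lemma clp_surj {A B : Type*} [TopologicalSpace A] [TopologicalSpace B] {f : A → B}
    (hf : Continuous f) (hsurj : Function.Surjective f) (hA : CLPCompact A) :
    CLPCompact B := by
  intro C hC hcov
  have hC' : ∀ U ∈ (fun U => f ⁻¹' U) '' C, IsClopen U := by
    rintro _ ⟨U, hU, rfl⟩
    exact (hC U hU).preimage hf
  have hcov' : ⋃₀ ((fun U => f ⁻¹' U) '' C) = univ := by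
    apply eq_univ_of_forall
    intro a
    have : f a ∈ ⋃₀ C := hcov ▸ mem_univ _
    obtain ⟨U, hU, ha⟩ := this
    exact ⟨f ⁻¹' U, ⟨U, hU, rfl⟩, ha⟩
  obtain ⟨D', hD'sub, hD'fin, hD'cov⟩ := hA _ hC' hcov'
  have hex : ∀ V, V ∈ D' → ∃ U, U ∈ C ∧ f ⁻¹' U = V := by
    intro V hV
    obtain ⟨U, hU, rfl⟩ := hD'sub hV
    exact ⟨U, hU, rfl⟩
  classical
  let F : (V : Set A) → V ∈ D' → Set B := fun V hV => (hex V hV).choose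
  refine ⟨{U | ∃ V, ∃ hV : V ∈ D', F V hV = U}, ?_, hD'fin.dependent_image F, ?_⟩
  · rintro U ⟨V, hV, rfl⟩
    exact (hex V hV).choose_spec.1
  · apply eq_univ_of_forall
    intro b
    obtain ⟨a, rfl⟩ := hsurj b
    have : a ∈ ⋃₀ D' := hD'cov ▸ mem_univ _
    obtain ⟨V, hV, haV⟩ := this
    refine ⟨F V hV, ⟨V, hV, rfl⟩, ?_⟩
    have hpre : f ⁻¹' (F V hV) = V := (hex V hV).choose_spec.2
    rw [← hpre] at haV
    exact haV

/-- From CLP-compactness of a subspace, extract a finite subcover of any family of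
clopen sets of the ambient space covering it. -/
lemma clp_subcover {Z : Type*} [TopologicalSpace Z] {Y : Set Z} (hY : CLPCompact Y)
    {C : Set (Set Z)} (hC : ∀ U ∈ C, IsClopen U) (hcov : Y ⊆ ⋃₀ C) :
    ∃ D ⊆ C, D.Finite ∧ Y ⊆ ⋃₀ D := by
  have hC' : ∀ U ∈ (fun U => (Subtype.val : Y → Z) ⁻¹' U) '' C, IsClopen U := by
    rintro _ ⟨U, hU, rfl⟩
    exact (hC U hU).preimage continuous_subtype_val
  have hcov' : ⋃₀ ((fun U => (Subtype.val : Y → Z) ⁻¹' U) '' C) = univ := by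
    apply eq_univ_of_forall
    intro y
    obtain ⟨U, hU, hyU⟩ := hcov y.2
    exact ⟨_, ⟨U, hU, rfl⟩, hyU⟩
  obtain ⟨D', hD'sub, hD'fin, hD'cov⟩ := hY _ hC' hcov'
  have hex : ∀ V, V ∈ D' → ∃ U, U ∈ C ∧ (Subtype.val : Y → Z) ⁻¹' U = V := by
    intro V hV
    obtain ⟨U, hU, rfl⟩ := hD'sub hV
    exact ⟨U, hU, rfl⟩
  classical
  let F : (V : Set Y) → V ∈ D' → Set Z := fun V hV => (hex V hV).choose
  refine ⟨{U | ∃ V, ∃ hV : V ∈ D', F V hV = U}, ?_, hD'fin.dependent_image F, ?_⟩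
  · rintro U ⟨V, hV, rfl⟩
    exact (hex V hV).choose_spec.1
  · intro z hz
    have : (⟨z, hz⟩ : Y) ∈ ⋃₀ D' := hD'cov ▸ mem_univ _
    obtain ⟨V, hV, hzV⟩ := this
    refine ⟨F V hV, ⟨V, hV, rfl⟩, ?_⟩
    have hpre : (Subtype.val : Y → Z) ⁻¹' (F V hV) = V := (hex V hV).choose_spec.2
    rw [← hpre] at hzV
    exact hzV

/-- In a CLP-compact space there is no infinite locally finite sequence of nonempty
clopen sets. -/
lemma no_locally_finite_clopen {R : Type*} [TopologicalSpace R] (hR : CLPCompact R)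
    (C : ℕ → Set R) (hcl : ∀ N, IsClopen (C N)) (hne : ∀ N, (C N).Nonempty)
    (hlf : ∀ z : R, ∃ V : Set R, IsOpen V ∧ z ∈ V ∧ ∃ M : ℕ, ∀ N, M ≤ N → C N ∩ V = ∅) :
    False := by
  classical
  set U : ℕ → Set R := fun M => (⋃ N ∈ {N : ℕ | M ≤ N}, C N)ᶜ with hU
  have hUmem : ∀ M z, z ∈ U M ↔ ∀ N, M ≤ N → z ∉ C N := by
    intro M z
    simp [hU]
  have hUmono : ∀ M M', M ≤ M' → U M ⊆ U M' := by
    intro M M' hMM z hz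
    rw [hUmem] at hz ⊢
    intro N hN
    exact hz N (le_trans hMM hN)
  have hUopen : ∀ M, IsOpen (U M) := by
    intro M
    rw [isOpen_iff_forall_mem_open]
    intro z hz
    obtain ⟨V, hVopen, hzV, M', hM'⟩ := hlf z
    refine ⟨V ∩ ⋂ N ∈ Finset.Ico M M', (C N)ᶜ, ?_, ?_, ?_⟩
    · intro w hw
      rw [hUmem]
      intro N hN hwC
      rcases le_or_gt M' N with hc | hc
      · have := hM' N hc
        have : w ∈ C N ∩ V := ⟨hwC, hw.1⟩
        rw [hM' N hc] at this
        exact this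
      · have hmem : N ∈ Finset.Ico M M' := Finset.mem_Ico.mpr ⟨hN, hc⟩
        have := Set.mem_iInter₂.mp hw.2 N hmem
        exact this hwC
    · exact hVopen.inter (isOpen_biInter_finset fun N _ => (hcl N).isClosed.isOpen_compl)
    · refine ⟨hzV, Set.mem_iInter₂.mpr fun N hN => ?_⟩
      rw [hUmem] at hz
      exact hz N (Finset.mem_Ico.mp hN).1
  have hUclosed : ∀ M, IsClosed (U M) := by
    intro M
    have : IsOpen (⋃ N ∈ {N : ℕ | M ≤ N}, C N) :=
      isOpen_biUnion fun N _ => (hcl N).isOpen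
    exact this.isClosed_compl
  have hcov : ⋃₀ (Set.range U) = univ := by
    apply eq_univ_of_forall
    intro z
    obtain ⟨V, hVopen, hzV, M, hM⟩ := hlf z
    refine ⟨U M, ⟨M, rfl⟩, ?_⟩
    rw [hUmem]
    intro N hN hzC
    have : z ∈ C N ∩ V := ⟨hzC, hzV⟩
    rw [hM N hN] at this
    exact this
  obtain ⟨D, hDsub, hDfin, hDcov⟩ := hR (Set.range U)
    (by rintro _ ⟨M, rfl⟩; exact ⟨hUclosed M, hUopen M⟩) hcov
  let g : Set R → ℕ := fun A => if h : ∃ M, U M = A then h.choose else 0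
  have hg : ∀ A ∈ D, U (g A) = A := by
    intro A hA
    obtain ⟨M, hM⟩ := hDsub hA
    have hex : ∃ M, U M = A := ⟨M, hM⟩
    simp only [g, dif_pos hex]
    exact hex.choose_spec
  have hbdd : BddAbove (g '' D) := (hDfin.image g).bddAbove
  obtain ⟨Mx, hMx⟩ := hbdd
  obtain ⟨z, hz⟩ := hne Mx
  have : z ∈ ⋃₀ D := hDcov ▸ mem_univ _
  obtain ⟨A, hA, hzA⟩ := this
  have h1 : z ∈ U (g A) := by rw [hg A hA]; exact hzA
  have h2 : g A ≤ Mx := hMx ⟨A, hA, rfl⟩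
  have h3 : z ∈ U Mx := hUmono _ _ h2 h1
  rw [hUmem] at h3
  exact h3 Mx le_rfl hz

/-! ### The topology of `SumSpace` -/

universe u

variable (X : ℕ → Type u) [∀ i, TopologicalSpace (X i)]

/-- The generating family of the topology on `SumSpace X`. -/
def Gens : Set (Set (SumSpace X)) :=
  ({S | ∃ (i : ℕ) (U : Set (X i)), IsOpen U ∧
      S = (fun x : X i => (some ⟨i, x⟩ : SumSpace X)) '' U} ∪
   {S | ∃ i : ℕ, S = insert (none : SumSpace X)
      {y : SumSpace X | ∃ (j : ℕ) (x : X j), i ≤ j ∧ y = some ⟨j, x⟩}})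

lemma topology_eq :
    (inferInstance : TopologicalSpace (SumSpace X)) =
      TopologicalSpace.generateFrom (Gens X) := rfl

/-- The inclusion of `X i` into `SumSpace X`. -/
def mk (i : ℕ) (x : X i) : SumSpace X := some ⟨i, x⟩

/-- The tail `{0} ∪ ⋃_{j ≥ M} X_j`. -/
def Tail (M : ℕ) : Set (SumSpace X) :=
  insert (none : SumSpace X)
    {y : SumSpace X | ∃ (j : ℕ) (x : X j), M ≤ j ∧ y = some ⟨j, x⟩}

lemma none_mem_tail (M : ℕ) : (none : SumSpace X) ∈ Tail X M := Or.inl rfl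

lemma some_mem_tail_iff {M j : ℕ} (x : X j) :
    (some ⟨j, x⟩ : SumSpace X) ∈ Tail X M ↔ M ≤ j := by
  constructor
  · rintro (h | ⟨j', x', hj', hx⟩)
    · exact (by cases h)
    · cases Option.some.inj hx
      exact hj'
  · intro hMj
    exact Or.inr ⟨j, x, hMj, rfl⟩

lemma tail_anti {M N : ℕ} (h : M ≤ N) : Tail X N ⊆ Tail X M := by
  rintro y (rfl | ⟨j, x, hj, rfl⟩)
  · exact none_mem_tail X M
  · exact Or.inr ⟨j, x, le_trans h hj, rfl⟩

lemma isOpen_gens {S : Set (SumSpace X)} (hS : S ∈ Gens X) : IsOpen S :=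
  TopologicalSpace.isOpen_generateFrom_of_mem (g := Gens X) hS

lemma isOpen_tail (M : ℕ) : IsOpen (Tail X M) :=
  isOpen_gens X (Or.inr ⟨M, rfl⟩)

lemma isOpen_image_of_isOpen {i : ℕ} {U : Set (X i)} (hU : IsOpen U) :
    IsOpen (mk X i '' U) :=
  isOpen_gens X (Or.inl ⟨i, U, hU, rfl⟩)

/-- The copy of `X i` inside `SumSpace X`. -/
def Col (i : ℕ) : Set (SumSpace X) :=
  Set.range (mk X i)

lemma isOpen_col (i : ℕ) : IsOpen (Col X i) := by
  have := isOpen_image_of_isOpen X (isOpen_univ : IsOpen (Set.univ : Set (X i)))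
  rwa [Set.image_univ] at this

lemma isClosed_tail (M : ℕ) : IsClosed (Tail X M) := by
  have hcompl : (Tail X M)ᶜ = ⋃ j ∈ {j : ℕ | j < M}, Col X j := by
    ext y
    constructor
    · intro hy
      match y with
      | none => exact absurd (none_mem_tail X M) hy
      | some ⟨j, x⟩ =>
        have hj : ¬ M ≤ j := fun h => hy (Or.inr ⟨j, x, h, rfl⟩)
        exact Set.mem_biUnion (Nat.lt_of_not_le hj) ⟨x, rfl⟩
    · intro hy
      obtain ⟨j, hj, x, rfl⟩ := by
        simpa [Col] using hy
      intro hmem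
      rcases hmem with h | ⟨j', x', hj', hx⟩
      · exact (by cases h)
      · cases Option.some.inj hx
        exact absurd hj' (Nat.not_le_of_lt hj)
  rw [← isOpen_compl_iff, hcompl]
  exact isOpen_biUnion fun j _ => isOpen_col X j

lemma isClopen_tail (M : ℕ) : IsClopen (Tail X M) :=
  ⟨isClosed_tail X M, isOpen_tail X M⟩

/-- Every open neighbourhood of `0` contains a tail. -/
lemma exists_tail_subset {W : Set (SumSpace X)} (hW : IsOpen W)
    (h0 : (none : SumSpace X) ∈ W) : ∃ M, Tail X M ⊆ W := by
  have hW' : TopologicalSpace.GenerateOpen (Gens X) W := hW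
  clear hW
  induction hW' with
  | basic S hS =>
    rcases hS with ⟨i, U, hU, rfl⟩ | ⟨M, rfl⟩
    · obtain ⟨x, -, hx⟩ := h0
      exact (by cases hx)
    · exact ⟨M, subset_rfl⟩
  | univ => exact ⟨0, fun y _ => trivial⟩
  | inter S T hS hT ihS ihT =>
    obtain ⟨M1, hM1⟩ := ihS h0.1
    obtain ⟨M2, hM2⟩ := ihT h0.2
    exact ⟨max M1 M2, fun y hy =>
      ⟨hM1 (tail_anti X (le_max_left M1 M2) hy), hM2 (tail_anti X (le_max_right M1 M2) hy)⟩⟩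
  | sUnion 𝒮 hmem ih =>
    obtain ⟨s, hs, h0s⟩ := h0
    obtain ⟨M, hM⟩ := ih s hs h0s
    exact ⟨M, fun y hy => ⟨s, hs, hM hy⟩⟩

/-- The inclusion of `X i` into `SumSpace X` is continuous. -/
lemma continuous_mk (i : ℕ) :
    Continuous (mk X i) := by
  have key : @Continuous (X i) (SumSpace X) _ (TopologicalSpace.generateFrom (Gens X))
      (mk X i) := by
    rw [continuous_generateFrom_iff]
    rintro s (⟨i', U, hU, rfl⟩ | ⟨M, rfl⟩)
    · by_cases hii : i = i'
      · subst hii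
        have : mk X i ⁻¹' ((fun x : X i => (some ⟨i, x⟩ : SumSpace X)) '' U) = U := by
          ext x
          constructor
          · rintro ⟨u, hu, hux⟩
            cases sigma_mk_injective (Option.some.inj hux)
            exact hu
          · intro hx
            exact ⟨x, hx, rfl⟩
        rwa [← this] at hU
      · have : mk X i ⁻¹' ((fun x : X i' => (some ⟨i', x⟩ : SumSpace X)) '' U) = ∅ := by
          ext x
          simp only [Set.mem_preimage, Set.mem_image, Set.mem_empty_iff_false, iff_false]
          rintro ⟨u, -, hux⟩
          have := Option.some.inj hux
          exact hii (congrArg Sigma.fst this).symm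
        exact this ▸ isOpen_empty
    · by_cases hMi : M ≤ i
      · have : mk X i ⁻¹' (Tail X M) = univ := by
          apply eq_univ_of_forall
          intro x
          exact Or.inr ⟨i, x, hMi, rfl⟩
        rw [show (insert (none : SumSpace X)
            {y : SumSpace X | ∃ (j : ℕ) (x : X j), M ≤ j ∧ y = some ⟨j, x⟩}) = Tail X M from rfl,
          this]
        exact isOpen_univ
      · have : mk X i ⁻¹' (Tail X M) = ∅ := by
          ext x
          simp only [Set.mem_preimage, Set.mem_empty_iff_false, iff_false]
          intro hx
          exact hMi ((some_mem_tail_iff X x).mp hx)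
        rw [show (insert (none : SumSpace X)
            {y : SumSpace X | ∃ (j : ℕ) (x : X j), M ≤ j ∧ y = some ⟨j, x⟩}) = Tail X M from rfl,
          this]
        exact isOpen_empty
  exact key

/-! ### The key step: `SumSpace X × R` is CLP-compact -/

lemma main_step {R : Type*} [TopologicalSpace R] (hR : CLPCompact R)
    (hcol : ∀ i, CLPCompact (X i × R)) : CLPCompact (SumSpace X × R) := by
  intro C hC hcov
  -- cover the zero fibre
  have hY0 : CLPCompact ({p : SumSpace X × R | p.1 = none} : Set (SumSpace X × R)) := by
    apply clp_surj
      (f := fun z : R => (⟨(none, z), rfl⟩ : {p : SumSpace X × R | p.1 = none})) ?_ ?_ hR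
    · exact Continuous.subtype_mk (continuous_const.prodMk continuous_id) _
    · rintro ⟨⟨a, z⟩, ha⟩
      have ha' : a = none := ha
      subst ha'
      exact ⟨z, rfl⟩
  obtain ⟨D0, hD0sub, hD0fin, hD0cov⟩ :=
    clp_subcover hY0 hC (by rw [hcov]; exact subset_univ _)
  have hGclopen : IsClopen (⋃₀ D0) := by
    rw [Set.sUnion_eq_biUnion]
    exact hD0fin.isClopen_biUnion fun U hU => hC U (hD0sub hU)
  set K : Set (SumSpace X × R) := (⋃₀ D0)ᶜ with hKdef
  have hKclopen : IsClopen K := hGclopen.compl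
  have hK0 : ∀ z : R, ((none : SumSpace X), z) ∉ K := by
    intro z hzK
    exact hzK (hD0cov (show ((none : SumSpace X), z) ∈
      {p : SumSpace X × R | p.1 = none} from rfl))
  -- boundedness of the complement
  have hbound : ∃ N : ℕ, ∀ p ∈ K, p.1 ∉ Tail X N := by
    by_contra hcon
    push_neg at hcon
    choose pf hpK hpT using hcon
    refine no_locally_finite_clopen hR (fun N => (fun z => ((pf N).1, z)) ⁻¹' K)
      (fun N => hKclopen.preimage (Continuous.prodMk continuous_const continuous_id))
      ?_ ?_
    · intro N
      exact ⟨(pf N).2, hpK N⟩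
    · intro z
      have hzG : ((none : SumSpace X), z) ∈ ⋃₀ D0 := by
        by_contra hzK
        exact hK0 z hzK
      obtain ⟨u, v, hu, hv, hnu, hzv, huv⟩ :=
        (isOpen_prod_iff.mp hGclopen.isOpen) none z hzG
      obtain ⟨M, hM⟩ := exists_tail_subset X hu hnu
      refine ⟨v, hv, hzv, M, ?_⟩
      intro N hNM
      ext w
      simp only [Set.mem_inter_iff, Set.mem_preimage, Set.mem_empty_iff_false, iff_false]
      rintro ⟨hw1, hw2⟩
      exact hw1 (huv ⟨hM (tail_anti X hNM (hpT N)), hw2⟩)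
  obtain ⟨N, hN⟩ := hbound
  -- the columns
  have hYi : ∀ i : ℕ, CLPCompact
      ({p : SumSpace X × R | ∃ x : X i, p.1 = mk X i x} : Set (SumSpace X × R)) := by
    intro i
    apply clp_surj (f := fun w : X i × R =>
      (⟨(mk X i w.1, w.2), ⟨w.1, rfl⟩⟩ :
        {p : SumSpace X × R | ∃ x : X i, p.1 = mk X i x})) ?_ ?_ (hcol i)
    · exact Continuous.subtype_mk
        (((continuous_mk X i).comp continuous_fst).prodMk continuous_snd) _
    · rintro ⟨⟨a, z⟩, ⟨x, hx⟩⟩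
      have hx' : a = mk X i x := hx
      subst hx'
      exact ⟨(x, z), rfl⟩
  have hDi : ∀ i : ℕ, ∃ D ⊆ C, D.Finite ∧
      {p : SumSpace X × R | ∃ x : X i, p.1 = mk X i x} ⊆ ⋃₀ D :=
    fun i => clp_subcover (hYi i) hC (by rw [hcov]; exact subset_univ _)
  choose Di hDisub hDifin hDicov using hDi
  refine ⟨D0 ∪ ⋃ i ∈ {i : ℕ | i < N}, Di i, ?_, ?_, ?_⟩
  · intro U hU
    rcases hU with hU | hU
    · exact hD0sub hU
    · obtain ⟨i, -, hUi⟩ := by simpa using hU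
      exact hDisub i hUi
  · exact hD0fin.union ((Set.finite_Iio N).biUnion fun i _ => hDifin i)
  · apply eq_univ_of_forall
    intro p
    by_cases hp : p ∈ ⋃₀ D0
    · obtain ⟨U, hU, hpU⟩ := hp
      exact ⟨U, Or.inl hU, hpU⟩
    · have hpK : p ∈ K := hp
      have hpT := hN p hpK
      obtain ⟨a, z⟩ := p
      match a, hpT with
      | none, hpT => exact absurd (none_mem_tail X N) hpT
      | some ⟨j, x⟩, hpT =>
        have hjN : j < N := by
          by_contra hc
          exact hpT ((some_mem_tail_iff X x).mpr (Nat.le_of_not_lt hc))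
        have hmem : (some ⟨j, x⟩, z) ∈
            {p : SumSpace X × R | ∃ x' : X j, p.1 = mk X j x'} := ⟨x, rfl⟩
        obtain ⟨U, hU, hpU⟩ := hDicov j hmem
        exact ⟨U, Or.inr (Set.mem_biUnion hjN hU), hpU⟩

/-! ### Finite products of the pieces -/

/-- An iterated binary product of pieces `X i`, `i ∈ l`. -/
def PL : List ℕ → Type u
  | [] => PUnit
  | i :: l => X i × PL l

instance instPL : ∀ l : List ℕ, TopologicalSpace (PL X l)
  | [] => inferInstanceAs (TopologicalSpace PUnit)
  | _ :: l => @instTopologicalSpaceProd _ _ _ (instPL l)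

/-- Repackaging a dependent-function product as an iterated binary product. -/
def toPL : ∀ l : List ℕ, (∀ j : Fin l.length, X (l.get j)) → PL X l
  | [] => fun _ => PUnit.unit
  | i :: l => fun w =>
      (w ⟨0, Nat.succ_pos _⟩, toPL l fun j => w ⟨j.1 + 1, Nat.succ_lt_succ j.2⟩)

lemma continuous_toPL : ∀ l : List ℕ, Continuous (toPL X l)
  | [] => continuous_const
  | i :: l => by
    refine Continuous.prodMk (continuous_apply _) ?_
    exact (continuous_toPL l).comp (continuous_pi fun j => continuous_apply _)

lemma surjective_toPL : ∀ l : List ℕ, Function.Surjective (toPL X l)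
  | [] => fun q => ⟨fun j => j.elim0, rfl⟩
  | i :: l => by
    rintro ⟨x, q⟩
    obtain ⟨w', hw'⟩ := surjective_toPL l q
    refine ⟨fun j => ?_, ?_⟩
    · exact (match j with
        | ⟨0, _⟩ => x
        | ⟨k + 1, hk⟩ => w' ⟨k, Nat.lt_of_succ_lt_succ hk⟩ :
        X ((i :: l).get j))
    · exact congrArg₂ Prod.mk rfl hw'

lemma pl_clp (h : ∀ (n : ℕ) (p : Fin n → ℕ), CLPCompact (∀ i : Fin n, X (p i)))
    (l : List ℕ) : CLPCompact (PL X l) :=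
  clp_surj (continuous_toPL X l) (surjective_toPL X l) (h l.length fun j => l.get j)

/-! ### The main induction -/

lemma powers (h : ∀ (n : ℕ) (p : Fin n → ℕ), CLPCompact (∀ i : Fin n, X (p i))) :
    ∀ (t : ℕ) (l : List ℕ), CLPCompact ((Fin t → SumSpace X) × PL X l) := by
  intro t
  induction t with
  | zero =>
    intro l
    apply clp_surj (f := fun q : PL X l =>
      ((fun j : Fin 0 => j.elim0, q) : (Fin 0 → SumSpace X) × PL X l)) ?_ ?_ (pl_clp X h l)
    · exact continuous_const.prodMk continuous_id
    · rintro ⟨g, q⟩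
      refine ⟨q, ?_⟩
      have hg : (fun j : Fin 0 => (j.elim0 : SumSpace X)) = g := funext fun j => j.elim0
      rw [hg]
  | succ t ih =>
    intro l
    have hcol : ∀ i : ℕ, CLPCompact (X i × ((Fin t → SumSpace X) × PL X l)) := by
      intro i
      apply clp_surj (f := fun w : (Fin t → SumSpace X) × PL X (i :: l) =>
        ((w.2.1, (w.1, w.2.2)) : X i × ((Fin t → SumSpace X) × PL X l))) ?_ ?_ (ih (i :: l))
      · exact (continuous_fst.comp continuous_snd).prodMk
          (continuous_fst.prodMk (continuous_snd.comp continuous_snd))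
      · rintro ⟨x, f, q⟩
        exact ⟨(f, (x, q)), rfl⟩
    have hmain := main_step X (ih l) hcol
    apply clp_surj (f := fun w : SumSpace X × ((Fin t → SumSpace X) × PL X l) =>
      ((Fin.cons w.1 w.2.1, w.2.2) : (Fin (t + 1) → SumSpace X) × PL X l)) ?_ ?_ hmain
    · refine Continuous.prodMk ?_ (continuous_snd.comp continuous_snd)
      apply continuous_pi
      intro j
      refine Fin.cases ?_ ?_ j
      · simpa only [Fin.cons_zero] using (continuous_fst :
          Continuous fun w : SumSpace X × ((Fin t → SumSpace X) × PL X l) => w.1)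
      · intro k
        simpa only [Fin.cons_succ, Function.comp_def] using
          ((continuous_apply k).comp (continuous_fst.comp continuous_snd) :
            Continuous fun w : SumSpace X × ((Fin t → SumSpace X) × PL X l) => w.2.1 k)
    · rintro ⟨g, q⟩
      refine ⟨(g 0, (fun k => g k.succ, q)), ?_⟩
      have hg : Fin.cons (g 0) (fun k => g k.succ) = g := Fin.cons_self_tail g
      simp only
      rw [hg]

end SumSpaceCLP

/-- If all finite products ∏_{i<n} X_{p(i)} are CLP-compact, then every finite power
of the convergent sum X is CLP-compact. -/
theorem sumSpace_finite_powers_clp (X : ℕ → Type*) [∀ i, TopologicalSpace (X i)]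
    (h : ∀ (n : ℕ) (p : Fin n → ℕ), CLPCompact (∀ i : Fin n, X (p i))) :
    ∀ n : ℕ, CLPCompact (Fin n → SumSpace X) := by
  intro n
  have hp := SumSpaceCLP.powers X h n []
  exact SumSpaceCLP.clp_surj
    (f := fun w : (Fin n → SumSpace X) × SumSpaceCLP.PL X [] => w.1)
    continuous_fst (fun g => ⟨(g, PUnit.unit), rfl⟩) hp
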